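/- Let X be a zigzag poset and ι : X' ↪ X the inclusion of the alternating subposet. Then the pullback (restriction) functor ι* on sheaves of vector spaces preserves injective objects: the restriction of every injective sheaf on X is an injective sheaf on X'. -/

import Mathlib

open CategoryTheory

/-! Zigzag posets.  A zigzag poset is a finite poset whose Hasse diagram is a path
`x_0 — x_1 — ... — x_n` with arbitrarily oriented edges.  We encode the orientation
of the edge between `x_l` and `x_{l+1}` by `o l : Bool` (`true` means `x_l < x_{l+1}`),
and `x_i ≤ x_j` iff all the edges between them point from `x_i` towards `x_j`. -/

/-- The order relation of the zigzag poset with edge orientations `o`. -/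
def zigzagLE (o : ℕ → Bool) (i j : ℕ) : Prop :=
  (i ≤ j ∧ ∀ l, i ≤ l → l < j → o l = true) ∨
  (j ≤ i ∧ ∀ l, j ≤ l → l < i → o l = false)

theorem zigzagLE_refl (o : ℕ → Bool) (i : ℕ) : zigzagLE o i i :=
  Or.inl ⟨le_rfl, fun _ h1 h2 => absurd (lt_of_le_of_lt h1 h2) (lt_irrefl _)⟩

theorem zigzagLE_trans (o : ℕ → Bool) (i j l : ℕ)
    (h1 : zigzagLE o i j) (h2 : zigzagLE o j l) : zigzagLE o i l := by
  rcases h1 with ⟨hij, hup1⟩ | ⟨hji, hdn1⟩ <;> rcases h2 with ⟨hjl, hup2⟩ | ⟨hlj, hdn2⟩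
  · refine Or.inl ⟨le_trans hij hjl, fun m hm1 hm2 => ?_⟩
    rcases Nat.lt_or_ge m j with h | h
    · exact hup1 m hm1 h
    · exact hup2 m h hm2
  · rcases le_or_gt i l with h | h
    · exact Or.inl ⟨h, fun m hm1 hm2 => hup1 m hm1 (lt_of_lt_of_le hm2 hlj)⟩
    · exact Or.inr ⟨le_of_lt h, fun m hm1 hm2 => hdn2 m hm1 (lt_of_lt_of_le hm2 hij)⟩
  · rcases le_or_gt i l with h | h
    · exact Or.inl ⟨h, fun m hm1 hm2 => hup2 m (le_trans hji hm1) hm2⟩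
    · exact Or.inr ⟨le_of_lt h, fun m hm1 hm2 => hdn1 m (le_trans hjl hm1) hm2⟩
  · refine Or.inr ⟨le_trans hlj hji, fun m hm1 hm2 => ?_⟩
    rcases Nat.lt_or_ge m j with h | h
    · exact hdn2 m hm1 h
    · exact hdn1 m h hm2

theorem zigzagLE_antisymm (o : ℕ → Bool) (i j : ℕ)
    (h1 : zigzagLE o i j) (h2 : zigzagLE o j i) : i = j := by
  rcases h1 with ⟨hij, hup1⟩ | ⟨hji, hdn1⟩ <;>
    rcases h2 with ⟨hji', hup2⟩ | ⟨hij', hdn2⟩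
  · omega
  · rcases Nat.lt_or_ge i j with h | h
    · have ht := hup1 i le_rfl h
      have hf := hdn2 i le_rfl h
      simp [ht] at hf
    · omega
  · rcases Nat.lt_or_ge j i with h | h
    · have ht := hup2 j le_rfl h
      have hf := hdn1 j le_rfl h
      simp [ht] at hf
    · omega
  · omega

/-- The zigzag poset on `{x_0, ..., x_n}` with edge orientations `o`. -/
def Zigzag (n : ℕ) (o : ℕ → Bool) : Type := Fin (n + 1)

instance (n : ℕ) (o : ℕ → Bool) : PartialOrder (Zigzag n o) where
  le i j := zigzagLE o (Fin.val i) (Fin.val j)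
  le_refl i := zigzagLE_refl o _
  le_trans i j l := zigzagLE_trans o _ _ _
  le_antisymm i j h1 h2 := Fin.ext (zigzagLE_antisymm o _ _ h1 h2)

/-- The index of a point of the zigzag poset. -/
def Zigzag.idx {n : ℕ} {o : ℕ → Bool} (x : Zigzag n o) : ℕ := Fin.val x

/-- The alternating subposet `X' ⊆ X`: all minimal elements together with the
internal maximal elements (the maximal elements flanked by minimal elements on
both sides); this is the alternating sequence of minimal and internal maximal
elements of the zigzag. -/
def altSet (n : ℕ) (o : ℕ → Bool) : Set (Zigzag n o) :=
  {x | IsMin x ∨ (IsMax x ∧ (∃ y : Zigzag n o, IsMin y ∧ y.idx < x.idx) ∧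
    (∃ y : Zigzag n o, IsMin y ∧ x.idx < y.idx))}

/-- The alternating subposet, with the induced order. -/
def AltSub (n : ℕ) (o : ℕ → Bool) : Type := {x : Zigzag n o // x ∈ altSet n o}

instance (n : ℕ) (o : ℕ → Bool) : PartialOrder (AltSub n o) :=
  inferInstanceAs (PartialOrder {x : Zigzag n o // x ∈ altSet n o})

/-- The inclusion `ι : X' ↪ X` is order preserving. -/
lemma altIncl_monotone (n : ℕ) (o : ℕ → Bool) :
    Monotone (fun x : AltSub n o => (x.val : Zigzag n o)) := fun _ _ h => h

/-- The restriction (pullback) functor `ι*` of sheaves along the inclusion of the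
alternating subposet. -/
noncomputable def restrictAlt (n : ℕ) (o : ℕ → Bool) (C : Type*) [Category C] :
    (Zigzag n o ⥤ C) ⥤ (AltSub n o ⥤ C) :=
  (Functor.whiskeringLeft (AltSub n o) (Zigzag n o) C).obj (altIncl_monotone n o).functor


/-! ### Auxiliary development -/

section AuxZigzag

variable {n : ℕ} {o : ℕ → Bool}

/-- Build an element of the zigzag from an index. -/
def zel (n : ℕ) (o : ℕ → Bool) (j : ℕ) (h : j < n + 1) : Zigzag n o := Fin.mk j h

lemma zidx_lt (x : Zigzag n o) : Zigzag.idx x < n + 1 := Fin.isLt x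

lemma zle_iff {x y : Zigzag n o} : x ≤ y ↔
    ((x.idx ≤ y.idx ∧ ∀ l, x.idx ≤ l → l < y.idx → o l = true) ∨
     (y.idx ≤ x.idx ∧ ∀ l, y.idx ≤ l → l < x.idx → o l = false)) := Iff.rfl

lemma zel_le_iff {i : ℕ} (hi : i < n + 1) {x : Zigzag n o} : zel n o i hi ≤ x ↔
    ((i ≤ x.idx ∧ ∀ l, i ≤ l → l < x.idx → o l = true) ∨
     (x.idx ≤ i ∧ ∀ l, x.idx ≤ l → l < i → o l = false)) := Iff.rfl

lemma le_zel_iff {i : ℕ} (hi : i < n + 1) {x : Zigzag n o} : x ≤ zel n o i hi ↔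
    ((x.idx ≤ i ∧ ∀ l, x.idx ≤ l → l < i → o l = true) ∨
     (i ≤ x.idx ∧ ∀ l, i ≤ l → l < x.idx → o l = false)) := Iff.rfl

lemma isMin_of_idx {x : Zigzag n o} (h1 : x.idx = 0 ∨ o (x.idx - 1) = false)
    (h2 : x.idx = n ∨ o x.idx = true) : IsMin x := by
  intro z hz
  have hzn := zidx_lt z; have hxn := zidx_lt x
  rcases zle_iff.mp hz with ⟨hle, hup⟩ | ⟨hle, hdn⟩
  · rcases Nat.lt_or_ge z.idx x.idx with h | h
    · have ht := hup (x.idx - 1) (by omega) (by omega)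
      rcases h1 with h1 | h1
      · omega
      · simp [ht] at h1
    · exact le_of_eq (Fin.ext (by omega : x.idx = z.idx))
  · rcases Nat.lt_or_ge x.idx z.idx with h | h
    · have hf := hdn x.idx le_rfl h
      rcases h2 with h2 | h2
      · omega
      · simp [hf] at h2
    · exact le_of_eq (Fin.ext (by omega : x.idx = z.idx))

lemma isMax_of_idx {x : Zigzag n o} (h1 : x.idx = 0 ∨ o (x.idx - 1) = true)
    (h2 : x.idx = n ∨ o x.idx = false) : IsMax x := by
  intro z hz
  have hzn := zidx_lt z; have hxn := zidx_lt x
  rcases zle_iff.mp hz with ⟨hle, hup⟩ | ⟨hle, hdn⟩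
  · rcases Nat.lt_or_ge x.idx z.idx with h | h
    · have ht := hup x.idx le_rfl h
      rcases h2 with h2 | h2
      · omega
      · simp [ht] at h2
    · exact le_of_eq (Fin.ext (by omega : z.idx = x.idx))
  · rcases Nat.lt_or_ge z.idx x.idx with h | h
    · have hf := hdn (x.idx - 1) (by omega) (by omega)
      rcases h1 with h1 | h1
      · omega
      · simp [hf] at h1
    · exact le_of_eq (Fin.ext (by omega : z.idx = x.idx))

lemma isMin_left {x : Zigzag n o} (h : IsMin x) (h0 : 0 < x.idx) : o (x.idx - 1) = false := by
  have hxn := zidx_lt x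
  cases hc : o (x.idx - 1) with
  | false => rfl
  | true =>
    exfalso
    have hz : zel n o (x.idx - 1) (by omega) ≤ x :=
      (zel_le_iff _).mpr (Or.inl ⟨by omega, fun l h1 h2 => by
        have hl : l = x.idx - 1 := by omega
        rw [hl]; exact hc⟩)
    rcases (le_zel_iff _).mp (h hz) with ⟨hle, _⟩ | ⟨_, hdn⟩
    · omega
    · have := hdn (x.idx - 1) le_rfl (by omega)
      simp [hc] at this

lemma isMin_right {x : Zigzag n o} (h : IsMin x) (h0 : x.idx < n) : o x.idx = true := by
  cases hc : o x.idx with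
  | true => rfl
  | false =>
    exfalso
    have hz : zel n o (x.idx + 1) (by omega) ≤ x :=
      (zel_le_iff _).mpr (Or.inr ⟨by omega, fun l h1 h2 => by
        have hl : l = x.idx := by omega
        rw [hl]; exact hc⟩)
    rcases (le_zel_iff _).mp (h hz) with ⟨_, hup⟩ | ⟨hle, _⟩
    · have := hup x.idx le_rfl (by omega)
      simp [hc] at this
    · omega

lemma descend_left (o : ℕ → Bool) (i : ℕ) :
    ∃ j, j ≤ i ∧ (∀ l, j ≤ l → l < i → o l = true) ∧ (j = 0 ∨ o (j - 1) = false) := by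
  induction i with
  | zero => exact ⟨0, le_rfl, fun l h1 h2 => by omega, Or.inl rfl⟩
  | succ i ih =>
    cases hc : o i with
    | false => exact ⟨i + 1, le_rfl, fun l h1 h2 => by omega, Or.inr (by simpa using hc)⟩
    | true =>
      obtain ⟨j, hj1, hj2, hj3⟩ := ih
      refine ⟨j, by omega, fun l h1 h2 => ?_, hj3⟩
      rcases Nat.lt_or_ge l i with h | h
      · exact hj2 l h1 h
      · have hl : l = i := by omega
        rw [hl]; exact hc

lemma descend_right (o : ℕ → Bool) {n : ℕ} (i : ℕ) (hi : i ≤ n) :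
    ∃ j, i ≤ j ∧ j ≤ n ∧ (∀ l, i ≤ l → l < j → o l = false) ∧ (j = n ∨ o j = true) := by
  obtain ⟨d, hd⟩ : ∃ d, n - i = d := ⟨_, rfl⟩
  induction d generalizing i with
  | zero =>
    exact ⟨i, le_rfl, hi, fun l h1 h2 => by omega, Or.inl (by omega)⟩
  | succ d ih =>
    cases hc : o i with
    | true => exact ⟨i, le_rfl, hi, fun l h1 h2 => by omega, Or.inr hc⟩
    | false =>
      obtain ⟨j, hj1, hj2, hj3, hj4⟩ := ih (i + 1) (by omega) (by omega)
      refine ⟨j, by omega, hj2, fun l h1 h2 => ?_, hj4⟩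
      rcases Nat.lt_or_ge l (i + 1) with h | h
      · have hl : l = i := by omega
        rw [hl]; exact hc
      · exact hj3 l h h2

lemma exists_min_le (x : Zigzag n o) (hx : x ∉ altSet n o) :
    ∃ m : Zigzag n o, IsMin m ∧ m ≤ x := by
  have hxn := zidx_lt x
  by_cases hL : 0 < x.idx ∧ o (x.idx - 1) = true
  · obtain ⟨j, hj1, hj2, hj3⟩ := descend_left o x.idx
    have hjlt : j < x.idx := by
      rcases Nat.lt_or_ge j x.idx with h' | h'
      · exact h'
      · exfalso
        have hj : j = x.idx := by omega
        rcases hj3 with h | h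
        · omega
        · rw [hj] at h
          rw [hL.2] at h
          exact Bool.noConfusion h
    exact ⟨zel n o j (by omega), isMin_of_idx hj3 (Or.inr (hj2 j le_rfl hjlt)),
      (zel_le_iff _).mpr (Or.inl ⟨le_of_lt hjlt, hj2⟩)⟩
  · have h1 : x.idx = 0 ∨ o (x.idx - 1) = false := by
      rcases Nat.eq_zero_or_pos x.idx with h | h
      · exact Or.inl h
      · right
        cases hc : o (x.idx - 1) with
        | false => rfl
        | true => exact absurd ⟨h, hc⟩ hL
    have h2 : ¬ (x.idx = n ∨ o x.idx = true) := fun h2 => hx (Or.inl (isMin_of_idx h1 h2))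
    push_neg at h2
    obtain ⟨hn, hof⟩ := h2
    have hof : o x.idx = false := by
      cases hc : o x.idx with
      | false => rfl
      | true => exact absurd hc hof
    obtain ⟨j, hj1, hj2, hj3, hj4⟩ := descend_right o (n := n) x.idx (by omega)
    have hjgt : x.idx < j := by
      rcases Nat.lt_or_ge x.idx j with h | h
      · exact h
      · exfalso
        have hj : j = x.idx := by omega
        rcases hj4 with h' | h'
        · omega
        · rw [hj, hof] at h'
          exact Bool.noConfusion h'
    have hjn : j < n + 1 := by omega
    refine ⟨zel n o j hjn, isMin_of_idx ?_ hj4,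
      (zel_le_iff _).mpr (Or.inr ⟨le_of_lt hjgt, hj3⟩)⟩
    exact Or.inr (hj3 (j - 1) (by omega) (by omega))

lemma min_le_eq {x : Zigzag n o} (hx : x ∉ altSet n o) {z m : Zigzag n o}
    (hz : IsMin z) (hzx : z ≤ x) (hm : IsMin m) (hmx : m ≤ x) : z = m := by
  have hxn := zidx_lt x; have hzn := zidx_lt z; have hmn := zidx_lt m
  have hzne : z.idx ≠ x.idx := by
    intro h
    have hzx' : z = x := Fin.ext h
    rw [hzx'] at hz
    exact hx (Or.inl hz)
  have hmne : m.idx ≠ x.idx := by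
    intro h
    have hmx' : m = x := Fin.ext h
    rw [hmx'] at hm
    exact hx (Or.inl hm)
  rcases zle_iff.mp hzx with ⟨hz1, hz2⟩ | ⟨hz1, hz2⟩ <;>
    rcases zle_iff.mp hmx with ⟨hm1, hm2⟩ | ⟨hm1, hm2⟩
  · -- both to the left of x
    rcases Nat.lt_trichotomy z.idx m.idx with h | h | h
    · have ht := hz2 (m.idx - 1) (by omega) (by omega)
      have hf := isMin_left hm (by omega)
      rw [ht] at hf; exact absurd hf (by simp)
    · exact Fin.ext h
    · have ht := hm2 (z.idx - 1) (by omega) (by omega)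
      have hf := isMin_left hz (by omega)
      rw [ht] at hf; exact absurd hf (by simp)
  · -- z left, m right : x is an internal max, contradiction
    exfalso
    have hzlt : z.idx < x.idx := by omega
    have hmgt : x.idx < m.idx := by omega
    have hmax : IsMax x := isMax_of_idx
      (Or.inr (hz2 (x.idx - 1) (by omega) (by omega)))
      (Or.inr (hm2 x.idx le_rfl (by omega)))
    exact hx (Or.inr ⟨hmax, ⟨z, hz, hzlt⟩, ⟨m, hm, hmgt⟩⟩)
  · -- z right, m left
    exfalso
    have hmlt : m.idx < x.idx := by omega
    have hzgt : x.idx < z.idx := by omega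
    have hmax : IsMax x := isMax_of_idx
      (Or.inr (hm2 (x.idx - 1) (by omega) (by omega)))
      (Or.inr (hz2 x.idx le_rfl (by omega)))
    exact hx (Or.inr ⟨hmax, ⟨m, hm, hmlt⟩, ⟨z, hz, hzgt⟩⟩)
  · -- both to the right of x
    rcases Nat.lt_trichotomy z.idx m.idx with h | h | h
    · have hf := hm2 z.idx (by omega) h
      have ht := isMin_right hz (by omega)
      rw [ht] at hf; exact absurd hf (by simp)
    · exact Fin.ext h
    · have hf := hz2 m.idx (by omega) h
      have ht := isMin_right hm (by omega)
      rw [ht] at hf; exact absurd hf (by simp)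

lemma exists_greatest (x : Zigzag n o) :
    ∃ m : Zigzag n o, m ∈ altSet n o ∧ m ≤ x ∧
      ∀ z : Zigzag n o, z ∈ altSet n o → z ≤ x → z ≤ m := by
  by_cases hx : x ∈ altSet n o
  · exact ⟨x, hx, le_rfl, fun z _ hz => hz⟩
  · obtain ⟨m, hm, hmx⟩ := exists_min_le x hx
    refine ⟨m, Or.inl hm, hmx, ?_⟩
    intro z hz hzx
    have hzmem := hz
    have hzmin : IsMin z := by
      rcases (hzmem : IsMin z ∨ (IsMax z ∧ (∃ y : Zigzag n o, IsMin y ∧ y.idx < z.idx) ∧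
          (∃ y : Zigzag n o, IsMin y ∧ z.idx < y.idx))) with hzm | ⟨hmax, _, _⟩
      · exact hzm
      · exfalso
        have hxz : z = x := le_antisymm hzx (hmax hzx)
        rw [hxz] at hz
        exact hx hz
    exact (min_le_eq hx hzmin hzx hm hmx).le

end AuxZigzag

/-- The right adjoint of the inclusion: sends `x` to the greatest element of the
alternating subposet below `x`. -/
noncomputable def altProj (n : ℕ) (o : ℕ → Bool) (x : Zigzag n o) : AltSub n o :=
  ⟨(exists_greatest x).choose, (exists_greatest x).choose_spec.1⟩

lemma alt_gc (n : ℕ) (o : ℕ → Bool) :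
    GaloisConnection (fun x : AltSub n o => (x.val : Zigzag n o)) (altProj n o) := by
  intro z x
  constructor
  · intro h
    exact (exists_greatest x).choose_spec.2.2 z.val z.prop h
  · intro h
    exact le_trans (show (z.val : Zigzag n o) ≤ (altProj n o x).val from h)
      (exists_greatest x).choose_spec.2.1

/-- The inclusion of the alternating subposet is left adjoint to `altProj`. -/
noncomputable def altAdj (n : ℕ) (o : ℕ → Bool) :
    (altIncl_monotone n o).functor ⊣ ((alt_gc n o).monotone_u).functor :=
  (alt_gc n o).adjunction

instance precomp_preservesMono {A B : Type*} [Category A] [Category B] (Φ : A ⥤ B)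
    (M : Type*) [Category M] [Limits.HasPullbacks M] :
    Functor.PreservesMonomorphisms ((Functor.whiskeringLeft A B M).obj Φ) := by
  constructor
  intro X Y f hf
  rw [NatTrans.mono_iff_mono_app] at hf ⊢
  intro a
  exact hf (Φ.obj a)

/-- Let `X` be a zigzag poset and `ι : X' ↪ X` the inclusion of the
alternating subposet.  Then the pullback (restriction) functor `ι*` on sheaves of
vector spaces preserves injective objects: the restriction of every injective sheaf
on `X` is an injective sheaf on `X'`. -/
theorem restrictAlt_preserves_injectives (k : Type) [Field k] (n : ℕ) (o : ℕ → Bool)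
    (F : Zigzag n o ⥤ ModuleCat k) (hF : Injective F) :
    Injective ((restrictAlt n o (ModuleCat k)).obj F) := by
  have adj := Adjunction.whiskerLeft (ModuleCat k) (altAdj n o)
  exact adj.map_injective F hF
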